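/- Let d > 0, 0 < ℓ < 1, y ∈ [0, 1], and 0 ≤ x ≤ d(1 - ℓy). Then ((ℓy)²(1 - ℓy)² + (ℓx)²) / ((2 - ℓy)²(1 - ℓy)² + (ℓx)²) ≤ (1 + d²) / ((2/ℓ - 1)² + d²). -/

import Mathlib

/-- For `0 ≤ x ≤ d(1 - ℓy)` and `y ∈ [0, 1]`, the squared Beltrami coefficient modulus
is at most `(1 + d²)/((2/ℓ - 1)² + d²)`. -/
theorem stmt_10 (d ℓ x y : ℝ) (hd : 0 < d) (hℓ0 : 0 < ℓ) (hℓ1 : ℓ < 1)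
    (hy : y ∈ Set.Icc (0 : ℝ) 1) (hx0 : 0 ≤ x) (hx : x ≤ d * (1 - ℓ * y)) :
    ((ℓ * y) ^ 2 * (1 - ℓ * y) ^ 2 + (ℓ * x) ^ 2) /
        ((2 - ℓ * y) ^ 2 * (1 - ℓ * y) ^ 2 + (ℓ * x) ^ 2) ≤
      (1 + d ^ 2) / ((2 / ℓ - 1) ^ 2 + d ^ 2) := by
  obtain ⟨hy0, hy1⟩ := hy
  have ht : ℓ * y ≤ ℓ := by nlinarith
  have hu : 0 < 1 - ℓ * y := by nlinarith
  have hrhs : (1 + d ^ 2) / ((2 / ℓ - 1) ^ 2 + d ^ 2)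
      = (ℓ ^ 2 + ℓ ^ 2 * d ^ 2) / ((2 - ℓ) ^ 2 + ℓ ^ 2 * d ^ 2) := by
    rw [div_eq_div_iff]
    · field_simp
    · positivity
    · positivity
  have h2 : 0 < 2 - ℓ * y := by linarith
  rw [hrhs, div_le_div_iff₀ (by nlinarith [sq_nonneg (ℓ * x), mul_pos (mul_pos h2 h2) (mul_pos hu hu)]) (by positivity)]
  have hA : ℓ ^ 2 * x ^ 2 ≤ ℓ ^ 2 * d ^ 2 * (1 - ℓ * y) ^ 2 := by
    nlinarith [mul_le_mul_of_nonneg_left (pow_le_pow_left₀ hx0 hx 2) (sq_nonneg ℓ)]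
  nlinarith [mul_nonneg (mul_nonneg (sub_nonneg.2 ht) (sq_nonneg (1 - ℓ * y)))
      (by nlinarith : (0:ℝ) ≤ ℓ + ℓ * y - ℓ * (ℓ * y)),
    mul_nonneg (by linarith : (0:ℝ) ≤ 1 - ℓ) (sub_nonneg.2 hA),
    mul_nonneg (mul_nonneg (mul_nonneg (sq_nonneg ℓ) (sq_nonneg d))
      (sq_nonneg (1 - ℓ * y))) (sub_nonneg.2 ht)]
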